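/- If (b_n) is the increasing enumeration of the multiset union of d sets A_j = { a_i^j + i·c_j : i ∈ ℕ }, where each (a_i^j) is a super-additive non-negative sequence with a_0^j = 0 and each c_j > 0, then (b_n) is itself super-additive: b_{m+n} ≥ b_m + b_n for all m, n. -/

import Mathlib

/-- **Super-additivity of the increasing merge.** If `(b n)` is the increasing enumeration
(witnessed by a bijection `e : Fin d × ℕ ≃ ℕ` and monotonicity of `b`) of the multiset union
of the `d` sets `A_j = { a_i^j + i·c_j : i ∈ ℕ }`, where each `(a_i^j)` is a super-additive
non-negative sequence with `a_0^j = 0` and each `c_j > 0`, then `(b n)` is itself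
super-additive: `b (m+n) ≥ b m + b n` for all `m, n`. -/
theorem merge_superadditive (d : ℕ) (hd : 0 < d)
    (a : Fin d → ℕ → ℝ) (c : Fin d → ℝ)
    (hc : ∀ j, 0 < c j)
    (ha0 : ∀ j, a j 0 = 0)
    (hnn : ∀ j i, 0 ≤ a j i)
    (hsuper : ∀ j, ∀ m n : ℕ, a j m + a j n ≤ a j (m + n))
    (b : ℕ → ℝ) (hbmono : Monotone b)
    (e : Fin d × ℕ ≃ ℕ)
    (he : ∀ p : Fin d × ℕ, b (e p) = a p.1 p.2 + (p.2 : ℝ) * c p.1) :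
    ∀ m n : ℕ, b m + b n ≤ b (m + n) := by
  classical
  intro m n
  set val : Fin d → ℕ → ℝ := fun j i => a j i + (i : ℝ) * c j with hval
  have hvalmono : ∀ j, StrictMono (val j) := by
    intro j i i' hii
    have h1 : a j i ≤ a j i' := by
      have h2 := hsuper j i (i' - i)
      have h0 := hnn j (i' - i)
      rw [Nat.add_sub_cancel' hii.le] at h2
      linarith
    have h2 : (i : ℝ) * c j < (i' : ℝ) * c j := by
      apply mul_lt_mul_of_pos_right _ (hc j)
      exact_mod_cast hii
    simp only [hval]; linarith
  have hemono : ∀ j, StrictMono (fun i => e (j, i)) := by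
    intro j i i' hii
    rcases lt_or_ge (e (j, i)) (e (j, i')) with h | h
    · exact h
    · exfalso
      have hb := hbmono h
      rw [he (j, i), he (j, i')] at hb
      exact absurd hb (not_le.mpr (hvalmono j hii))
  have hex : ∀ j N, ∃ i, N ≤ e (j, i) := fun j N => ⟨N, (hemono j).le_apply⟩
  set cnt : Fin d → ℕ → ℕ := fun j N => Nat.find (hex j N) with hcnt
  have hcnt_spec : ∀ j N, N ≤ e (j, cnt j N) := fun j N => Nat.find_spec (hex j N)
  have hcnt_iff : ∀ j N i, e (j, i) < N ↔ i < cnt j N := by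
    intro j N i
    constructor
    · intro h
      by_contra hle
      push_neg at hle
      have h1 := (hemono j).monotone hle
      have h2 := hcnt_spec j N
      omega
    · intro h
      have := Nat.find_min (hex j N) h
      omega
  have hsum : ∀ N, ∑ j, cnt j N = N := by
    intro N
    set S := (Finset.range N).image e.symm with hS
    have hcard : S.card = N := by
      rw [hS, Finset.card_image_of_injective _ e.symm.injective, Finset.card_range]
    have hmem : ∀ p : Fin d × ℕ, p ∈ S ↔ e p < N := by
      intro p
      simp only [hS, Finset.mem_image, Finset.mem_range]
      constructor
      · rintro ⟨i, hi, rfl⟩; simpa using hi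
      · intro h; exact ⟨e p, h, by simp⟩
    have hfib : S.card = ∑ j, (S.filter (fun p => p.1 = j)).card :=
      Finset.card_eq_sum_card_fiberwise (f := Prod.fst) (t := Finset.univ)
        (fun p _ => Finset.mem_univ _)
    conv_rhs => rw [← hcard, hfib]
    apply Finset.sum_congr rfl
    intro j _
    have heq : S.filter (fun p => p.1 = j)
        = (Finset.range (cnt j N)).image (fun i => (j, i)) := by
      ext ⟨j', i⟩
      simp only [Finset.mem_filter, Finset.mem_image, Finset.mem_range, hmem,
        Prod.mk.injEq]
      constructor
      · rintro ⟨h1, rfl⟩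
        exact ⟨i, (hcnt_iff _ N i).mp h1, rfl, rfl⟩
      · rintro ⟨x, hx, h1, h2⟩
        subst h2; cases h1
        exact ⟨(hcnt_iff _ N x).mpr hx, rfl⟩
    rw [heq, Finset.card_image_of_injective, Finset.card_range]
    intro x y hxy
    simpa using hxy
  have key : ∀ j N, b N ≤ val j (cnt j N) := by
    intro j N
    calc b N ≤ b (e (j, cnt j N)) := hbmono (hcnt_spec j N)
      _ = val j (cnt j N) := he _
  have hlt : ∑ j, (cnt j m + cnt j n) < ∑ j, cnt j (m + n + 1) := by
    rw [Finset.sum_add_distrib, hsum, hsum, hsum]; omega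
  obtain ⟨j, -, hj⟩ := Finset.exists_lt_of_sum_lt hlt
  have hek : e (j, cnt j m + cnt j n) ≤ m + n := by
    have := (hcnt_iff j (m + n + 1) _).mpr hj
    omega
  have hv : val j (cnt j m) + val j (cnt j n) ≤ val j (cnt j m + cnt j n) := by
    have hs := hsuper j (cnt j m) (cnt j n)
    simp only [hval]
    push_cast
    nlinarith [hc j]
  calc b m + b n ≤ val j (cnt j m) + val j (cnt j n) := add_le_add (key j m) (key j n)
    _ ≤ val j (cnt j m + cnt j n) := hv
    _ = b (e (j, cnt j m + cnt j n)) := by rw [he (j, cnt j m + cnt j n)]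
    _ ≤ b (m + n) := hbmono hek
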